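/- Fix integers n ≥ 1, p ≥ 1 and m ≥ 1. Then the following identity holds in ℚ: binom(nmp, mp) = m · Σ_{w ∈ P(n,p,m)} 1/(c(w)+1). (This identity expresses that the image under the morphism sending every word to 1 of the noncommutative power sum Φ_m, specialized at the staircase lattice paths, equals the ghost component w_m(*binom(np,p)) = binom(nmp, mp).) -/

import Mathlib

/-- `latticePaths n p m` is the set of words over `{U, R}` (here `true` codes a
right step `R` and `false` codes an up step `U`) having `mp` letters `R`,
`(n−1)mp` letters `U`, and such that every prefix with `r` letters `R` has at
most `(n−1)p(⌊r/p⌋+1)` letters `U`: the lattice paths from `(0,0)` to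
`((n−1)mp, mp)` never going above the staircase `(↑^{(n−1)p}→^p)^m`. -/
def latticePaths (n p m : ℕ) : Set (List Bool) :=
  {w | w.count true = m * p ∧ w.count false = (n - 1) * m * p ∧
    ∀ v, v <+: w → v.count false ≤ (n - 1) * p * (v.count true / p + 1)}

/-- The number of intermediate corner points `((n−1)kp, kp)`, `0 < k < m`,
through which the path coded by `w` passes. -/
noncomputable def cornerCount (n p m : ℕ) (w : List Bool) : ℕ :=
  Set.ncard {k : ℕ | 0 < k ∧ k < m ∧
    ∃ v, v <+: w ∧ v.count true = k * p ∧ v.count false = (n - 1) * k * p}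

open List Finset

private lemma count_take_mono (l : List Bool) {a b : ℕ} (h : a ≤ b) :
    (l.take a).count true ≤ (l.take b).count true := by
  have h1 : l.take a = (l.take b).take a := by rw [List.take_take, min_eq_left h]
  rw [h1]
  exact (List.take_sublist a (l.take b)).count_le true

private lemma count_take_split (l : List Bool) (a b : ℕ) :
    (l.take (a + b)).count true
      = (l.take a).count true + ((l.drop a).take b).count true := by
  rw [List.take_add, List.count_append]

private lemma count_take_le_self (l : List Bool) (a : ℕ) :
    (l.take a).count true ≤ a :=
  le_trans (List.count_le_length (a := true)) (List.length_take_le a l)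

private lemma mem_latticePaths_iff_aux' {n p m : ℕ} (hn : 1 ≤ n) (hp : 1 ≤ p)
    {w : List Bool} (hct : w.count true = m * p) (hl : w.length = m * (n * p)) :
    w ∈ latticePaths n p m ↔ ∀ k ≤ m, k * p ≤ (w.take (k * (n * p))).count true := by
  obtain ⟨n', rfl⟩ : ∃ n', n = n' + 1 := ⟨n - 1, by omega⟩
  simp only [latticePaths, Set.mem_setOf_eq, Nat.add_sub_cancel]
  constructor
  · rintro ⟨-, -, hpre⟩ k hk
    set v := w.take (k * ((n' + 1) * p)) with hv
    have h3 := hpre v (List.take_prefix _ w)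
    by_contra hcon
    push_neg at hcon
    set t := v.count true with ht'
    have hvlen : v.length = k * ((n' + 1) * p) := by
      rw [hv, List.length_take]
      have : k * ((n' + 1) * p) ≤ m * ((n' + 1) * p) := Nat.mul_le_mul_right _ hk
      rw [hl]; omega
    have hdiv : t / p + 1 ≤ k := by
      have : t / p < k := (Nat.div_lt_iff_lt_mul hp).mpr (by linarith [hcon])
      omega
    have e1 : t + v.count false = k * ((n' + 1) * p) := by
      have := List.count_true_add_count_false v; omega
    have e2 : v.count false ≤ n' * p * k := h3.trans (Nat.mul_le_mul_left _ hdiv)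
    have e3 : k * ((n' + 1) * p) = k * p + n' * p * k := by ring
    linarith
  · intro H
    have hcf : w.count false = n' * m * p := by
      have h := List.count_true_add_count_false w
      rw [hl, hct] at h
      have e : m * ((n' + 1) * p) = m * p + n' * m * p := by ring
      omega
    refine ⟨hct, hcf, ?_⟩
    intro v hv
    have hvt : v = w.take v.length := List.prefix_iff_eq_take.mp hv
    set ℓ := v.length with hℓ
    have hle : ℓ ≤ m * ((n' + 1) * p) := hl ▸ hv.length_le
    have hnp : 0 < (n' + 1) * p := by positivity
    set k := ℓ / ((n' + 1) * p) with hk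
    have hkm : k ≤ m := by
      calc ℓ / ((n' + 1) * p) ≤ m * ((n' + 1) * p) / ((n' + 1) * p) :=
            Nat.div_le_div_right hle
        _ = m := Nat.mul_div_cancel m hnp
    have hkk : k * ((n' + 1) * p) ≤ ℓ := by
      have := Nat.div_mul_le_self ℓ ((n' + 1) * p)
      have hc : ℓ / ((n' + 1) * p) * ((n' + 1) * p) = k * ((n' + 1) * p) := by rw [hk]
      omega
    rcases eq_or_lt_of_le hkm with heq | hklt
    · have hℓeq : ℓ = m * ((n' + 1) * p) := by
        have h5 : m * ((n' + 1) * p) ≤ ℓ := by rw [← heq]; exact hkk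
        omega
      have hvw : v = w := by rw [hvt, hℓeq, ← hl, List.take_length]
      rw [hvw, hcf, hct]
      have hd : m * p / p = m := Nat.mul_div_cancel m hp
      rw [hd]
      have : n' * p * (m + 1) = n' * m * p + n' * p := by ring
      linarith [Nat.zero_le (n' * p)]
    · have hs : ℓ < (k + 1) * ((n' + 1) * p) := by
        have h1 := Nat.div_add_mod ℓ ((n' + 1) * p)
        have h2 := Nat.mod_lt ℓ hnp
        have h3 : (k + 1) * ((n' + 1) * p) = ((n' + 1) * p) * k + (n' + 1) * p := by ring
        have hc : ((n' + 1) * p) * (ℓ / ((n' + 1) * p)) = ((n' + 1) * p) * k := by rw [hk]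
        omega
      have h1 : k * p ≤ (w.take (k * ((n' + 1) * p))).count true := H k (le_of_lt hklt)
      have h2 : (k + 1) * p ≤ (w.take ((k + 1) * ((n' + 1) * p))).count true :=
        H (k + 1) hklt
      set t := v.count true with ht'
      have hwt : (w.take ℓ).count true = t := by rw [ht', hvt]
      have hvt' : k * p ≤ t := by
        have := count_take_mono w hkk
        rw [hwt] at this
        exact h1.trans this
      have hfloor : k ≤ t / p := (Nat.le_div_iff_mul_le hp).mpr hvt'
      have e4 : (w.take ((k + 1) * ((n' + 1) * p))).count true + ℓ
          ≤ t + (k + 1) * ((n' + 1) * p) := by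
        have hsplit := count_take_split w ℓ ((k + 1) * ((n' + 1) * p) - ℓ)
        rw [Nat.add_sub_cancel' hs.le] at hsplit
        have hb : ((w.drop ℓ).take ((k + 1) * ((n' + 1) * p) - ℓ)).count true
            ≤ (k + 1) * ((n' + 1) * p) - ℓ := count_take_le_self _ _
        rw [hsplit, hwt]
        omega
      have hfd : v.count false + t = ℓ := by
        have := List.count_true_add_count_false v; omega
      have hm1 : n' * p * (k + 1) ≤ n' * p * (t / p + 1) :=
        Nat.mul_le_mul_left _ (by omega)
      have hr1 : (k + 1) * ((n' + 1) * p) = (k + 1) * p + n' * p * (k + 1) := by ring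
      linarith [h2, e4, hfd, hm1, hr1]

private lemma cornerCount_eq_aux' {n p m : ℕ} (hn : 1 ≤ n) (hp : 1 ≤ p)
    {w : List Bool} (hl : w.length = m * (n * p)) :
    cornerCount n p m w =
      ((Finset.range m).filter
        (fun k => 0 < k ∧ (w.take (k * (n * p))).count true = k * p)).card := by
  obtain ⟨n', rfl⟩ : ∃ n', n = n' + 1 := ⟨n - 1, by omega⟩
  rw [cornerCount, ← Set.ncard_coe_finset]
  congr 1
  ext k
  simp only [Finset.coe_filter, Finset.mem_range, Set.mem_setOf_eq, Nat.add_sub_cancel]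
  constructor
  · rintro ⟨hk0, hkm, v, hpre, hvt, hvf⟩
    refine ⟨hkm, hk0, ?_⟩
    have hvlen : v.length = k * ((n' + 1) * p) := by
      have h1 := List.count_true_add_count_false v
      rw [hvt, hvf] at h1
      have e : k * p + n' * k * p = k * ((n' + 1) * p) := by ring
      omega
    have h2 := List.prefix_iff_eq_take.mp hpre
    rw [hvlen] at h2
    rw [← h2, hvt]
  · rintro ⟨hkm, hk0, hc⟩
    refine ⟨hk0, hkm, w.take (k * ((n' + 1) * p)), List.take_prefix _ _, hc, ?_⟩
    have hvlen : (w.take (k * ((n' + 1) * p))).length = k * ((n' + 1) * p) := by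
      rw [List.length_take, hl]
      have : k * ((n' + 1) * p) ≤ m * ((n' + 1) * p) := Nat.mul_le_mul_right _ hkm.le
      omega
    have h2 := List.count_true_add_count_false (w.take (k * ((n' + 1) * p)))
    rw [hc, hvlen] at h2
    have e : k * p + n' * k * p = k * ((n' + 1) * p) := by ring
    omega

private lemma rot_count_lo {n p m : ℕ} {u : List Bool} (hl : u.length = m * (n * p))
    {i k : ℕ} (him : i ≤ m) (hik : i + k ≤ m) :
    ((u.rotate (i * (n * p))).take (k * (n * p))).count true
        + (u.take (i * (n * p))).count true
      = (u.take ((i + k) * (n * p))).count true := by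
  set r := i * (n * p) with hr
  have hrle : r ≤ u.length := by
    rw [hl, hr]; exact Nat.mul_le_mul_right _ him
  rw [List.rotate_eq_drop_append_take hrle, List.take_append]
  have hdl : (u.drop r).length = u.length - r := List.length_drop ..
  have hz : k * (n * p) - (u.drop r).length = 0 := by
    rw [hdl, hl, hr]
    have h1 : i * (n * p) + k * (n * p) ≤ m * (n * p) := by
      have : (i + k) * (n * p) ≤ m * (n * p) := Nat.mul_le_mul_right _ hik
      have e : (i + k) * (n * p) = i * (n * p) + k * (n * p) := by ring
      omega
    omega
  rw [hz]
  simp only [List.take_zero, List.count_append, List.count_nil, Nat.add_zero]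
  have hsplit := count_take_split u r (k * (n * p))
  have e : r + k * (n * p) = (i + k) * (n * p) := by rw [hr]; ring
  rw [e] at hsplit
  omega

private lemma rot_count_hi {n p m : ℕ} {u : List Bool} (hl : u.length = m * (n * p))
    (hct : u.count true = m * p)
    {i k : ℕ} (him : i ≤ m) (hkm : k ≤ m) (hik : m ≤ i + k) :
    ((u.rotate (i * (n * p))).take (k * (n * p))).count true
        + (u.take (i * (n * p))).count true
      = (u.take ((i + k - m) * (n * p))).count true + m * p := by
  set r := i * (n * p) with hr
  have hrle : r ≤ u.length := by
    rw [hl, hr]; exact Nat.mul_le_mul_right _ him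
  rw [List.rotate_eq_drop_append_take hrle, List.take_append]
  have hdl : (u.drop r).length = u.length - r := List.length_drop ..
  -- first piece: the whole drop
  have hfull : (u.drop r).take (k * (n * p)) = u.drop r := by
    apply List.take_of_length_le
    rw [hdl, hl, hr]
    have h1 : (m - i) * (n * p) ≤ k * (n * p) := Nat.mul_le_mul_right _ (by omega)
    have e : (m - i) * (n * p) = m * (n * p) - i * (n * p) := Nat.sub_mul m i (n * p)
    omega
  rw [hfull]
  -- second piece length arithmetic
  have harg : k * (n * p) - (u.drop r).length = (i + k - m) * (n * p) := by
    rw [hdl, hl, hr]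
    have e1 : (i + k - m) * (n * p) + m * (n * p) = k * (n * p) + i * (n * p) := by
      have : i + k - m + m = k + i := by omega
      calc (i + k - m) * (n * p) + m * (n * p) = (i + k - m + m) * (n * p) := by ring
        _ = (k + i) * (n * p) := by rw [this]
        _ = k * (n * p) + i * (n * p) := by ring
    omega
  rw [harg]
  have htt : ((u.take r).take ((i + k - m) * (n * p))) = u.take ((i + k - m) * (n * p)) := by
    rw [List.take_take]
    congr 1
    have : (i + k - m) * (n * p) ≤ i * (n * p) := Nat.mul_le_mul_right _ (by omega)
    rw [hr]; omega
  rw [List.count_append, htt]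
  -- count of drop
  have hdc : (u.take r).count true + (u.drop r).count true = m * p := by
    rw [← List.count_append, List.take_append_drop, hct]
  omega

/-- `Good n p m u i` : block cut `i` is a minimum of `j ↦ B j - j*p` where
`B j` is the number of `true`s among the first `j*(n*p)` letters of `u`. -/
private def Good (n p m : ℕ) (u : List Bool) (i : ℕ) : Prop :=
  ∀ j < m, (u.take (i * (n * p))).count true + j * p
      ≤ (u.take (j * (n * p))).count true + i * p

private lemma rot_mem_iff {n p m : ℕ} (hn : 1 ≤ n) (hp : 1 ≤ p)
    {u : List Bool} (hl : u.length = m * (n * p)) (hct : u.count true = m * p)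
    {i : ℕ} (him : i < m) :
    u.rotate (i * (n * p)) ∈ latticePaths n p m ↔ Good n p m u i := by
  have hperm := List.rotate_perm u (i * (n * p))
  have hct' : (u.rotate (i * (n * p))).count true = m * p := by
    rw [hperm.count_eq true, hct]
  have hl' : (u.rotate (i * (n * p))).length = m * (n * p) := by
    rw [List.length_rotate, hl]
  have hBm : (u.take (m * (n * p))).count true = m * p := by
    rw [← hl, List.take_length, hct]
  have hB0 : (u.take (0 * (n * p))).count true = 0 := by simp
  rw [mem_latticePaths_iff_aux' hn hp hct' hl']
  constructor
  · intro hall j hj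
    rcases le_or_gt i j with hij | hij
    · have h := hall (j - i) (by omega)
      have hr := rot_count_lo hl him.le (by omega : i + (j - i) ≤ m)
      rw [show i + (j - i) = j by omega] at hr
      have e : (j - i) * p + i * p = j * p := by
        rw [← Nat.add_mul]; congr 1; omega
      omega
    · have h := hall (j + m - i) (by omega)
      have hr := rot_count_hi hl hct him.le (by omega : j + m - i ≤ m)
        (by omega : m ≤ i + (j + m - i))
      rw [show i + (j + m - i) - m = j by omega] at hr
      have e : (j + m - i) * p + i * p = j * p + m * p := by
        rw [← Nat.add_mul, ← Nat.add_mul]; congr 1; omega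
      omega
  · intro hg k hk
    rcases eq_or_lt_of_le hk with rfl | hkm
    · have hfull : (u.rotate (i * (n * p))).take (k * (n * p)) = u.rotate (i * (n * p)) := by
        apply List.take_of_length_le
        rw [List.length_rotate, hl]
      rw [hfull, hct']
    · rcases lt_trichotomy (i + k) m with hik | hik | hik
      · have h := hg (i + k) hik
        have hr := rot_count_lo hl him.le hik.le
        have e : (i + k) * p = i * p + k * p := by ring
        omega
      · have hr := rot_count_lo hl him.le hik.le
        rw [hik, hBm] at hr
        have h := hg 0 (by omega)
        rw [hB0] at h
        have e : k * p + i * p = m * p := by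
          rw [← Nat.add_mul]; congr 1; omega
        omega
      · have h := hg (i + k - m) (by omega)
        have hr := rot_count_hi hl hct him.le hkm.le (by omega)
        have e : (i + k - m) * p + m * p = i * p + k * p := by
          rw [← Nat.add_mul]
          have e2 : i * p + k * p = (i + k) * p := by ring
          rw [e2]; congr 1; omega
        omega

private lemma good_eq_iff {n p m : ℕ} {u : List Bool} {i j : ℕ}
    (hgi : Good n p m u i) (him : i < m) (hjm : j < m) :
    ((u.take (j * (n * p))).count true + i * p
      = (u.take (i * (n * p))).count true + j * p) ↔ Good n p m u j := by
  constructor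
  · intro he j' hj'
    have h1 := hgi j' hj'
    linarith
  · intro hgj
    have h1 := hgi j hjm
    have h2 := hgj i him
    omega

open scoped Classical in
private lemma per_word {n p m : ℕ} (hn : 1 ≤ n) (hp : 1 ≤ p) (hm : 1 ≤ m)
    {u : List Bool} (hl : u.length = m * (n * p)) (hct : u.count true = m * p) :
    ∑ i ∈ Finset.range m, (if u.rotate (i * (n * p)) ∈ latticePaths n p m
        then (1 : ℚ) / (cornerCount n p m (u.rotate (i * (n * p))) + 1) else 0) = 1 := by
  set G : Finset ℕ := (Finset.range m).filter (fun i => Good n p m u i) with hG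
  have hGmem : ∀ i, i ∈ G ↔ i < m ∧ Good n p m u i := by
    intro i; rw [hG, Finset.mem_filter, Finset.mem_range]
  -- G is nonempty
  have hGne : G.Nonempty := by
    obtain ⟨i₀, hi₀mem, hi₀⟩ := Finset.exists_min_image (Finset.range m)
      (fun j => ((u.take (j * (n * p))).count true : ℤ) - (j : ℤ) * (p : ℤ))
      ⟨0, Finset.mem_range.mpr (by omega)⟩
    refine ⟨i₀, (hGmem i₀).mpr ⟨Finset.mem_range.mp hi₀mem, ?_⟩⟩
    intro j hj
    have h := hi₀ j (Finset.mem_range.mpr hj)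
    zify
    push_cast at h ⊢
    linarith
  have hGcard : 0 < G.card := Finset.card_pos.mpr hGne
  -- corner condition for a good cut
  have hkey : ∀ i ∈ G, ∀ k, 0 < k → k < m →
      ((((u.rotate (i * (n * p))).take (k * (n * p))).count true = k * p)
        ↔ (if i + k < m then i + k else i + k - m) ∈ G) := by
    intro i hiG k hk0 hkm
    obtain ⟨him, hgi⟩ := (hGmem i).mp hiG
    by_cases hik : i + k < m
    · simp only [if_pos hik]
      have hr := rot_count_lo hl him.le hik.le
      rw [hGmem]
      have e : (i + k) * p = i * p + k * p := by ring
      constructor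
      · intro hc
        refine ⟨hik, (good_eq_iff hgi him hik).mp (by omega)⟩
      · rintro ⟨-, hgj⟩
        have := (good_eq_iff hgi him hik).mpr hgj
        omega
    · simp only [if_neg hik]
      push_neg at hik
      have hjm : i + k - m < m := by omega
      have hr := rot_count_hi hl hct him.le hkm.le hik
      rw [hGmem]
      have e : (i + k - m) * p + m * p = i * p + k * p := by
        rw [← Nat.add_mul]
        have e2 : i * p + k * p = (i + k) * p := by ring
        rw [e2]; congr 1; omega
      constructor
      · intro hc
        refine ⟨hjm, (good_eq_iff hgi him hjm).mp (by omega)⟩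
      · rintro ⟨-, hgj⟩
        have := (good_eq_iff hgi him hjm).mpr hgj
        omega
  -- corner count of a good rotation
  have hcorner : ∀ i ∈ G,
      cornerCount n p m (u.rotate (i * (n * p))) + 1 = G.card := by
    intro i hiG
    obtain ⟨him, hgi⟩ := (hGmem i).mp hiG
    have hl' : (u.rotate (i * (n * p))).length = m * (n * p) := by
      rw [List.length_rotate, hl]
    rw [cornerCount_eq_aux' hn hp hl']
    have hbij : ((Finset.range m).filter (fun k => 0 < k ∧
        ((u.rotate (i * (n * p))).take (k * (n * p))).count true = k * p)).card
        = (G.erase i).card := by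
      apply Finset.card_nbij' (fun k => if i + k < m then i + k else i + k - m)
        (fun j => if i < j then j - i else j + m - i)
      · intro k hk
        have hk' := Finset.mem_filter.mp hk
        have hkr := Finset.mem_range.mp hk'.1
        have hk0 := hk'.2.1
        have hkc := hk'.2.2
        have hjG := (hkey i hiG k hk0 hkr).mp hkc
        beta_reduce; rw [Finset.mem_coe, Finset.mem_erase]
        refine ⟨?_, hjG⟩
        split <;> omega
      · intro j hj
        have hji := (Finset.mem_erase.mp hj).1
        have hjG := (Finset.mem_erase.mp hj).2
        have hjm := ((hGmem j).mp hjG).1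
        beta_reduce; rw [Finset.mem_coe, Finset.mem_filter, Finset.mem_range]
        set k := if i < j then j - i else j + m - i with hk
        have hk0 : 0 < k := by rw [hk]; split <;> omega
        have hkm : k < m := by rw [hk]; split <;> omega
        refine ⟨hkm, hk0, ?_⟩
        rw [hkey i hiG k hk0 hkm]
        have hkj : (if i + k < m then i + k else i + k - m) = j := by
          rw [hk]; by_cases hij : i < j
          · rw [if_pos hij]; split <;> omega
          · rw [if_neg hij]; split <;> omega
        rw [hkj]
        exact hjG
      · intro k hk
        have hk' := Finset.mem_filter.mp hk
        have hkr := Finset.mem_range.mp hk'.1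
        have hk0 := hk'.2.1
        by_cases hik : i + k < m
        · beta_reduce; rw [if_pos hik]; split <;> omega
        · beta_reduce; rw [if_neg hik]; split <;> omega
      · intro j hj
        have hji := (Finset.mem_erase.mp hj).1
        have hjG := (Finset.mem_erase.mp hj).2
        have hjm := ((hGmem j).mp hjG).1
        by_cases hij : i < j
        · beta_reduce; rw [if_pos hij]; split <;> omega
        · beta_reduce; rw [if_neg hij]; split <;> omega
    rw [hbij, Finset.card_erase_of_mem hiG]
    omega
  -- now compute the sum
  have hterm : ∀ i ∈ Finset.range m,
      (if u.rotate (i * (n * p)) ∈ latticePaths n p m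
        then (1 : ℚ) / (cornerCount n p m (u.rotate (i * (n * p))) + 1) else 0)
      = (if i ∈ G then (1 : ℚ) / (G.card : ℚ) else 0) := by
    intro i hir
    have him := Finset.mem_range.mp hir
    have hmem := rot_mem_iff hn hp hl hct him
    by_cases hig : i ∈ G
    · rw [if_pos ((hmem).mpr ((hGmem i).mp hig).2), if_pos hig]
      have := hcorner i hig
      have hcast : ((cornerCount n p m (u.rotate (i * (n * p))) : ℚ) + 1) = (G.card : ℚ) := by
        rw [← this]; push_cast; ring
      rw [hcast]
    · rw [if_neg, if_neg hig]
      intro hmem'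
      exact hig ((hGmem i).mpr ⟨him, hmem.mp hmem'⟩)
  rw [Finset.sum_congr rfl hterm]
  rw [Finset.sum_ite_mem]
  have hGsub : Finset.range m ∩ G = G := by
    rw [Finset.inter_eq_right]
    intro x hx
    exact Finset.mem_range.mpr ((hGmem x).mp hx).1
  rw [hGsub, Finset.sum_const, nsmul_eq_mul]
  field_simp

open scoped Classical in
private noncomputable def QSet (N T : ℕ) : Finset (List Bool) :=
  ((Finset.range N).powersetCard T).image
    (fun s => (List.range N).map (fun j => decide (j ∈ s)))

open scoped Classical in
private lemma count_map_decide (N : ℕ) (s : Finset ℕ) (hs : s ⊆ Finset.range N) :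
    ((List.range N).map (fun j => decide (j ∈ s))).count true = s.card := by
  rw [List.count_eq_countP, List.countP_map]
  have e1 : ((fun x => x == true) ∘ fun j => decide (j ∈ s))
      = fun j => decide (j ∈ s) := by
    funext j; simp
  rw [e1, List.countP_eq_length_filter]
  have e2 : ((List.range N).filter (fun j => decide (j ∈ s))).length
      = ((Finset.range N).filter (fun j => j ∈ s)).card := rfl
  rw [e2, Finset.filter_mem_eq_inter, Finset.inter_eq_right.mpr hs]

open scoped Classical in
private lemma mem_QSet (N T : ℕ) (w : List Bool) :
    w ∈ QSet N T ↔ w.length = N ∧ w.count true = T := by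
  constructor
  · intro hw
    obtain ⟨s, hs, rfl⟩ := Finset.mem_image.mp hw
    obtain ⟨hsub, hcard⟩ := Finset.mem_powersetCard.mp hs
    constructor
    · rw [List.length_map, List.length_range]
    · rw [count_map_decide N s hsub, hcard]
  · rintro ⟨hlen, hcnt⟩
    rw [QSet, Finset.mem_image]
    set s : Finset ℕ := (Finset.range N).filter (fun j => w.getD j false = true) with hsdef
    have hsub : s ⊆ Finset.range N := Finset.filter_subset _ _
    have hmap : (List.range N).map (fun j => decide (j ∈ s)) = w := by
      apply List.ext_getElem
      · rw [List.length_map, List.length_range, hlen]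
      · intro j h1 h2
        have hjN : j < N := by
          rwa [List.length_map, List.length_range] at h1
        have hjw : j < w.length := by rwa [hlen]
        rw [List.getElem_map, List.getElem_range]
        have : j ∈ s ↔ w[j] = true := by
          rw [hsdef, Finset.mem_filter, Finset.mem_range,
            List.getD_eq_getElem w false hjw]
          tauto
        rcases Bool.eq_false_or_eq_true w[j] with hb | hb <;> simp [this, hb]
    refine ⟨s, Finset.mem_powersetCard.mpr ⟨hsub, ?_⟩, hmap⟩
    rw [← count_map_decide N s hsub, hmap, hcnt]

open scoped Classical in
private lemma card_QSet (N T : ℕ) : (QSet N T).card = N.choose T := by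
  rw [QSet]
  rw [Finset.card_image_of_injOn, Finset.card_powersetCard, Finset.card_range]
  intro s hs t ht he
  simp only [Finset.mem_coe, Finset.mem_powersetCard] at hs ht
  have hpt : ∀ j ∈ List.range N, decide (j ∈ s) = decide (j ∈ t) :=
    List.map_inj_left.mp he
  ext a
  by_cases haN : a < N
  · have := hpt a (List.mem_range.mpr haN)
    exact decide_eq_decide.mp this
  · constructor <;> intro hmem
    · exact absurd (Finset.mem_range.mp (hs.1 hmem)) haN
    · exact absurd (Finset.mem_range.mp (ht.1 hmem)) haN

open scoped Classical in
/-- The identity `binom(nmp, mp) = m · Σ_{w ∈ P(n,p,m)} 1/(c(w)+1)`: the image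
under the morphism sending every word to `1` of the noncommutative power sum
`Φ_m`, specialized at the staircase lattice paths, equals the ghost component
`w_m(*binom(np,p)) = binom(nmp,mp)`. -/
theorem choose_eq_sum_over_lattice_paths (n p m : ℕ)
    (hn : 1 ≤ n) (hp : 1 ≤ p) (hm : 1 ≤ m) :
    (Nat.choose (n * m * p) (m * p) : ℚ) =
      m * ∑ᶠ w ∈ latticePaths n p m, (1 : ℚ) / (cornerCount n p m w + 1) := by
  set N := m * (n * p) with hN
  have hNe : n * m * p = N := by rw [hN]; ring
  set Q := QSet N (m * p) with hQ
  have hQmem : ∀ w, w ∈ Q ↔ w.length = N ∧ w.count true = m * p :=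
    fun w => mem_QSet N (m * p) w
  have hlen_of_mem : ∀ w ∈ latticePaths n p m, w.length = N ∧ w.count true = m * p := by
    intro w hw
    obtain ⟨hct, hcf, -⟩ := hw
    refine ⟨?_, hct⟩
    have h := List.count_true_add_count_false w
    rw [hct, hcf] at h
    obtain ⟨n', rfl⟩ : ∃ n', n = n' + 1 := ⟨n - 1, by omega⟩
    simp only [Nat.add_sub_cancel] at h
    rw [hN]
    have e : m * p + n' * m * p = m * ((n' + 1) * p) := by ring
    omega
  set F : List Bool → ℚ := fun w =>
    if w ∈ latticePaths n p m then (1 : ℚ) / (cornerCount n p m w + 1) else 0 with hF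
  have key : ∀ u ∈ Q, ∑ i ∈ Finset.range m, F (u.rotate (i * (n * p))) = 1 := by
    intro u hu
    obtain ⟨hl, hct⟩ := (hQmem u).mp hu
    rw [hN] at hl
    exact per_word hn hp hm hl hct
  have hrotsum : ∀ i < m, (∑ u ∈ Q, F (u.rotate (i * (n * p)))) = ∑ w ∈ Q, F w := by
    intro i him
    have hrN : i * (n * p) ≤ N := by
      rw [hN]; exact Nat.mul_le_mul_right _ him.le
    apply Finset.sum_nbij' (fun u => u.rotate (i * (n * p)))
      (fun w => w.rotate (N - i * (n * p)))
    · intro u hu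
      obtain ⟨hl, hct⟩ := (hQmem u).mp hu
      refine (hQmem _).mpr ⟨by rw [List.length_rotate, hl], ?_⟩
      rw [(List.rotate_perm u _).count_eq true, hct]
    · intro w hw
      obtain ⟨hl, hct⟩ := (hQmem w).mp hw
      refine (hQmem _).mpr ⟨by rw [List.length_rotate, hl], ?_⟩
      rw [(List.rotate_perm w _).count_eq true, hct]
    · intro u hu
      obtain ⟨hl, -⟩ := (hQmem u).mp hu
      rw [List.rotate_rotate, Nat.add_sub_cancel' hrN, ← hl, List.rotate_length]
    · intro w hw
      obtain ⟨hl, -⟩ := (hQmem w).mp hw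
      rw [List.rotate_rotate, Nat.sub_add_cancel hrN, ← hl, List.rotate_length]
    · intro u hu
      rfl
  calc (Nat.choose (n * m * p) (m * p) : ℚ)
      = (Q.card : ℚ) := by rw [hQ, card_QSet, hNe]
    _ = ∑ u ∈ Q, (1 : ℚ) := by rw [Finset.sum_const, nsmul_eq_mul, mul_one]
    _ = ∑ u ∈ Q, ∑ i ∈ Finset.range m, F (u.rotate (i * (n * p))) :=
        Finset.sum_congr rfl (fun u hu => (key u hu).symm)
    _ = ∑ i ∈ Finset.range m, ∑ u ∈ Q, F (u.rotate (i * (n * p))) := Finset.sum_comm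
    _ = ∑ i ∈ Finset.range m, ∑ w ∈ Q, F w :=
        Finset.sum_congr rfl (fun i hi => hrotsum i (Finset.mem_range.mp hi))
    _ = m * ∑ w ∈ Q, F w := by
        rw [Finset.sum_const, Finset.card_range, nsmul_eq_mul]
    _ = m * ∑ᶠ w ∈ latticePaths n p m, (1 : ℚ) / (cornerCount n p m w + 1) := by
        congr 1
        have hseteq : latticePaths n p m
            = ↑(Q.filter (fun w => w ∈ latticePaths n p m)) := by
          ext w
          simp only [Finset.coe_filter, Set.mem_setOf_eq, Finset.mem_coe]
          constructor
          · intro hw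
            exact ⟨(hQmem w).mpr (hlen_of_mem w hw), hw⟩
          · rintro ⟨-, hw⟩
            exact hw
        rw [hseteq, finsum_mem_coe_finset, Finset.sum_filter]
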